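/- Let p be a prime, a ∈ ℚ_p with |a|_p > 1, and f(x) = x³ + ax². If |x|_p = |a|_p, then |f(x)|_p = |a|_p²·|x + a|_p. In particular, if |x + a|_p < 1/|a|_p³ then |f(x)|_p < 1/|a|_p, so fⁿ(x) → 0. -/

import Mathlib

theorem sphere_a_image (p : ℕ) [Fact p.Prime] (a : ℚ_[p]) (ha : 1 < ‖a‖)
    (f : ℚ_[p] → ℚ_[p]) (hf : ∀ x, f x = x ^ 3 + a * x ^ 2)
    (x : ℚ_[p]) (hx : ‖x‖ = ‖a‖) :
    ‖f x‖ = ‖a‖ ^ 2 * ‖x + a‖ ∧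
      (‖x + a‖ < 1 / ‖a‖ ^ 3 → ‖f x‖ < 1 / ‖a‖ ∧
        Filter.Tendsto (fun n => f^[n] x) Filter.atTop (nhds 0)) := by
  have ha0 : (0:ℝ) < ‖a‖ := lt_trans one_pos ha
  have h1 : ‖f x‖ = ‖a‖ ^ 2 * ‖x + a‖ := by
    rw [hf]
    have h : x ^ 3 + a * x ^ 2 = x ^ 2 * (x + a) := by ring
    rw [h, norm_mul, norm_pow, hx]
  refine ⟨h1, fun hlt => ?_⟩
  have h2 : ‖f x‖ < 1 / ‖a‖ := by
    rw [h1]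
    calc ‖a‖ ^ 2 * ‖x + a‖ < ‖a‖ ^ 2 * (1 / ‖a‖ ^ 3) :=
          mul_lt_mul_of_pos_left hlt (by positivity)
      _ = 1 / ‖a‖ := by field_simp
  refine ⟨h2, ?_⟩
  set y := f x with hy
  have hy1 : ‖y‖ < 1 := lt_trans h2 (by
    rw [div_lt_one ha0]; exact ha)
  set c := ‖a‖ * ‖y‖ with hc
  have hc0 : 0 ≤ c := by positivity
  have hc1 : c < 1 := by
    have := (lt_div_iff₀ ha0).mp h2
    calc c = ‖y‖ * ‖a‖ := by rw [hc]; ring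
      _ < 1 := this
  have key : ∀ z : ℚ_[p], ‖z‖ ≤ ‖y‖ → ‖f z‖ ≤ c * ‖z‖ := by
    intro z hz
    have hz1 : ‖z‖ < 1 := lt_of_le_of_lt hz hy1
    rw [hf]
    calc ‖z ^ 3 + a * z ^ 2‖ ≤ max ‖z ^ 3‖ ‖a * z ^ 2‖ := Padic.nonarchimedean _ _
      _ ≤ ‖a‖ * ‖z‖ ^ 2 := by
          rw [norm_mul, norm_pow, norm_pow]
          apply max_le
          · calc ‖z‖ ^ 3 = ‖z‖ * ‖z‖ ^ 2 := by ring
              _ ≤ ‖a‖ * ‖z‖ ^ 2 := by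
                  apply mul_le_mul_of_nonneg_right (le_of_lt (lt_trans hz1 ha))
                  positivity
          · exact le_refl _
      _ ≤ c * ‖z‖ := by
          rw [hc]
          calc ‖a‖ * ‖z‖ ^ 2 = ‖a‖ * ‖z‖ * ‖z‖ := by ring
            _ ≤ ‖a‖ * ‖y‖ * ‖z‖ := by
                apply mul_le_mul_of_nonneg_right _ (norm_nonneg z)
                exact mul_le_mul_of_nonneg_left hz (le_of_lt ha0)
  have bound : ∀ n : ℕ, ‖f^[n] y‖ ≤ c ^ n * ‖y‖ := by
    intro n
    induction n with
    | zero => simp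
    | succ n ih =>
      have hle : ‖f^[n] y‖ ≤ ‖y‖ := le_trans ih (by
        calc c ^ n * ‖y‖ ≤ 1 * ‖y‖ := by
              apply mul_le_mul_of_nonneg_right _ (norm_nonneg y)
              exact pow_le_one₀ hc0 (le_of_lt hc1)
          _ = ‖y‖ := one_mul _)
      rw [Function.iterate_succ_apply']
      calc ‖f (f^[n] y)‖ ≤ c * ‖f^[n] y‖ := key _ hle
        _ ≤ c * (c ^ n * ‖y‖) := mul_le_mul_of_nonneg_left ih hc0
        _ = c ^ (n + 1) * ‖y‖ := by ring
  have ht : Filter.Tendsto (fun n => f^[n] y) Filter.atTop (nhds 0) := by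
    rw [tendsto_zero_iff_norm_tendsto_zero]
    apply squeeze_zero (fun n => norm_nonneg _) bound
    have : Filter.Tendsto (fun n : ℕ => c ^ n) Filter.atTop (nhds 0) :=
      tendsto_pow_atTop_nhds_zero_of_lt_one hc0 hc1
    simpa using this.mul_const ‖y‖
  have hshift : ∀ n : ℕ, f^[n + 1] x = f^[n] y := by
    intro n; rw [Function.iterate_succ_apply]
  rw [← Filter.tendsto_add_atTop_iff_nat 1]
  simpa [hshift] using ht
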